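/- For every normalized block sequence (y_ℓ) in X_ius and every k ≥ m_2 there exists a finite linear combination of (y_ℓ) which is a normalized 2-ℓ_1^k average. -/

import Mathlib

open scoped BigOperators
open Classical

noncomputable section

/-- `c00`: the finitely supported real sequences on `ℕ`. -/
abbrev c00 : Type := ℕ →₀ ℝ

namespace Ius

/-- The unit vector `e_k` (also written `e_k^*` when viewed as a functional). -/
def e (k : ℕ) : c00 := Finsupp.single k 1

/-- The pairing `f(x) = ∑ k, f k * x k`. -/
def dot (f x : c00) : ℝ := x.sum fun k v => f k * v

/-- Every element of `A` is smaller than every element of `B`. -/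
def suppLt (A B : Finset ℕ) : Prop := ∀ a ∈ A, ∀ b ∈ B, a < b

/-- `x < y` for finitely supported vectors: `max supp x < min supp y`. -/
def blockLt (x y : c00) : Prop := suppLt x.support y.support

/-- `max supp x` (junk value `0` if the support is empty). -/
def maxSupp (x : c00) : ℕ := x.support.max.unbotD 0

/-- `min supp x` (junk value `0` if the support is empty). -/
def minSupp (x : c00) : ℕ := x.support.min.untopD 0

/-- `range x`: the smallest integer interval containing `supp x`. -/
def rangeI (x : c00) : Finset ℕ :=
  if h : x.support.Nonempty then Finset.Icc (x.support.min' h) (x.support.max' h) else ∅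

/-- `E ⊆ ℕ` is an interval. -/
def IsInterval (E : Set ℕ) : Prop := ∀ a ∈ E, ∀ b ∈ E, ∀ c : ℕ, a ≤ c → c ≤ b → c ∈ E

/-- Restriction `E x` of a vector `x` to a set of coordinates `E`. -/
def restrictTo (E : Set ℕ) (x : c00) : c00 :=
  letI := Classical.decPred fun k => k ∈ E
  Finsupp.filter (fun k => k ∈ E) x

/-- A block sequence: successive nonzero vectors. -/
def IsBlockSeq (x : ℕ → c00) : Prop := ∀ k, x k ≠ 0 ∧ blockLt (x k) (x (k + 1))

/-- A vector with rational coordinates. -/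
def IsRat (x : c00) : Prop := ∀ k, ∃ q : ℚ, x k = (q : ℝ)

/-- The set `Q`: finitely supported, nonzero rational sequences with sup-norm at most 1. -/
def Qset : Set c00 := {x | x ≠ 0 ∧ IsRat x ∧ ∀ k, |x k| ≤ 1}

/-- The set `Q_s` of tuples `(x_1,f_1,…,x_n,f_n)` of elements of `Q` with
`range(x_i) ∪ range(f_i) < range(x_{i+1}) ∪ range(f_{i+1})`. -/
def QsSet : Set (List (c00 × c00)) :=
  {φ | φ ≠ [] ∧ (∀ p ∈ φ, p.1 ∈ Qset ∧ p.2 ∈ Qset) ∧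
    φ.Chain' fun p q => suppLt (p.1.support ∪ p.2.support) (q.1.support ∪ q.2.support)}

/-- The parameters `(m_j)`, `(n_j)`, `(s_j)` of the construction. -/
structure Params where
  m : ℕ → ℕ
  n : ℕ → ℕ
  s : ℕ → ℕ
  m_one : m 1 = 2
  m_rec : ∀ j, 1 ≤ j → m (j + 1) = m j ^ 5
  n_one : n 1 = 4
  n_rec : ∀ j, 1 ≤ j → n (j + 1) = (4 * n j) ^ s j
  s_pos : ∀ j, 1 ≤ j → 1 ≤ s j
  s_big : ∀ j, 1 ≤ j → m (j + 1) ^ 3 ≤ 2 ^ s j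

/-- The coding function `σ`: an injection from `Q_s` into the even positive integers,
increasing along extensions, with `max (range(x_n) ∪ range(f_n)) ≤ m_{σ(φ)}^{1/2}`. -/
structure Coding (P : Params) where
  σ : List (c00 × c00) → ℕ
  even_pos : ∀ φ ∈ QsSet, ∃ k, 1 ≤ k ∧ σ φ = 2 * k
  inj : Set.InjOn σ QsSet
  mono : ∀ φ ∈ QsSet, φ.dropLast ∈ QsSet → σ φ.dropLast < σ φ
  bound : ∀ φ ∈ QsSet, ∀ p ∈ φ.getLast?, ∀ a ∈ p.1.support ∪ p.2.support,
    (a : ℝ) ≤ Real.sqrt (P.m (σ φ))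

/-- `x_i`: the `i`-th (1-indexed) vector entry of a tuple in `Q_s`. -/
def xC (φ : List (c00 × c00)) (i : ℕ) : c00 := (φ.getD (i - 1) (0, 0)).1

/-- `f_i`: the `i`-th (1-indexed) functional entry of a tuple in `Q_s`. -/
def fC (φ : List (c00 × c00)) (i : ℕ) : c00 := (φ.getD (i - 1) (0, 0)).2

/-- `φ_i = (x_1,f_1,…,x_i,f_i)`: the prefix of length `i`. -/
def pref (φ : List (c00 × c00)) (i : ℕ) : List (c00 × c00) := φ.take i

/-- `K_0 = {± e_n^*}`. -/
def K0set : Set c00 := {f | ∃ k, f = e k ∨ f = -e k}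

/-- The condition on `(x_1, f_1)` of a special sequence of length `2k`. -/
def headCond (P : Params) (k : ℕ) (x f : c00) : Prop :=
  ∃ j, 1 ≤ j ∧ (2 * k : ℝ) < Real.sqrt (P.m (2 * j)) ∧
    ∃ F : Finset ℕ, F.card = P.n (2 * j) ∧
      x = ((P.n (2 * j) : ℝ))⁻¹ • ∑ l ∈ F, e l ∧
      f = ((P.m (2 * j) : ℝ))⁻¹ • ∑ l ∈ F, e l

/-- `φ` is a special sequence (of length `2k` for some `k ≥ 1`). -/
def IsSpecialSeq (P : Params) (C : Coding P) (φ : List (c00 × c00)) : Prop :=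
  φ ∈ QsSet ∧ ∃ k, 1 ≤ k ∧ φ.length = 2 * k ∧
    headCond P k (xC φ 1) (fC φ 1) ∧
    (∀ i, 1 ≤ i → i ≤ k →
      (∀ t, |fC φ (2 * i) t| ≤ ((P.m (C.σ (pref φ (2 * i - 1))) : ℝ))⁻¹) ∧
      |dot (fC φ (2 * i)) (xC φ (2 * i))| ≤ ((P.m (C.σ (pref φ (2 * i - 1))) : ℝ))⁻¹) ∧
    (∀ i, 1 ≤ i → i < k →
      ∃ F : Finset ℕ, F.card = P.n (C.σ (pref φ (2 * i))) ∧
        xC φ (2 * i + 1) = ((P.n (C.σ (pref φ (2 * i))) : ℝ))⁻¹ • ∑ l ∈ F, e l ∧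
        fC φ (2 * i + 1) = ((P.m (C.σ (pref φ (2 * i))) : ℝ))⁻¹ • ∑ l ∈ F, e l)

/-- The condition defining the coefficients `λ_{f'_{2i}}`. -/
def lamCond (P : Params) (C : Coding P) (j : ℕ) (φ : List (c00 × c00))
    (f' : ℕ → c00) (lam : ℕ → ℝ) (i : ℕ) : Prop :=
  (dot (f' i) (xC φ (2 * i)) ≠ 0 →
    lam i = dot (f' i) (((P.m (C.σ (pref φ (2 * i - 1))) : ℝ)) • xC φ (2 * i))) ∧
  (dot (f' i) (xC φ (2 * i)) = 0 →
    lam i = 1 / (P.n (2 * j + 1) : ℝ) ^ 2 ∨ lam i = -(1 / (P.n (2 * j + 1) : ℝ) ^ 2))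

/-- The set `K_{n,φ}^{2j+1}` built from a special sequence `φ` over a previous level `prev`. -/
def KphiSet (P : Params) (C : Coding P) (prev : ℕ → Set c00) (j : ℕ)
    (φ : List (c00 × c00)) : Set c00 :=
  {f | ∃ ε : ℝ, (ε = 1 ∨ ε = -1) ∧ ∃ E : Set ℕ, IsInterval E ∧
    ∃ (f' : ℕ → c00) (lam : ℕ → ℝ),
      (∀ i, 1 ≤ i → 2 * i ≤ P.n (2 * j + 1) →
        f' i ∈ prev (C.σ (pref φ (2 * i - 1))) ∧
        (f' i).support = (fC φ (2 * i)).support ∧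
        (∀ g ∈ prev (C.σ (pref φ (2 * i - 1))),
          |dot g (xC φ (2 * i))| ≤ ((P.m (C.σ (pref φ (2 * i - 1))) : ℝ))⁻¹) ∧
        lamCond P C j φ f' lam i) ∧
      f = (ε * ((P.m (2 * j + 1) : ℝ))⁻¹) •
        restrictTo E (∑ i ∈ Finset.Icc 1 (P.n (2 * j + 1) / 2),
          (lam i • fC φ (2 * i - 1) + f' i))}

/-- Admissibility of a special sequence `φ` at a given level:
`f_{2i} ∈ K_{n-1}^{σ(φ_{2i-1})}`. -/
def SpecialAdm (P : Params) (C : Coding P) (prev : ℕ → Set c00) (j : ℕ)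
    (φ : List (c00 × c00)) : Prop :=
  IsSpecialSeq P C φ ∧ φ.length = P.n (2 * j + 1) ∧
    ∀ i, 1 ≤ i → 2 * i ≤ P.n (2 * j + 1) →
      fC φ (2 * i) ∈ prev (C.σ (pref φ (2 * i - 1)))

/-- The even operation `(A_{n_{2j}}, 1/m_{2j})`. -/
def evenStep (P : Params) (prev : ℕ → Set c00) (j : ℕ) : Set c00 :=
  {f | ∃ fs : List c00, fs ≠ [] ∧ fs.length ≤ P.n (2 * j) ∧
    (∀ g ∈ fs, ∃ j', g ∈ prev j') ∧ fs.Chain' blockLt ∧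
    f = ((P.m (2 * j) : ℝ))⁻¹ • fs.sum}

/-- The odd (special functional) operation. -/
def oddStep (P : Params) (C : Coding P) (prev : ℕ → Set c00) (j : ℕ) : Set c00 :=
  ⋃ φ ∈ {ψ : List (c00 × c00) | SpecialAdm P C prev j ψ}, KphiSet P C prev j φ

/-- The inductively defined family `K_n^j`. -/
def KF (P : Params) (C : Coding P) : ℕ → ℕ → Set c00
  | 0, j => if j = 0 then K0set else ∅
  | N + 1, j =>
      if j = 0 then K0set
      else if j = 1 then ∅
      else if j % 2 = 0 then KF P C N j ∪ evenStep P (KF P C N) (j / 2)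
      else KF P C N j ∪ oddStep P C (KF P C N) (j / 2)

/-- The norming set `K = ⋃_n ⋃_j K_n^j` of the space `X_ius`. -/
def Kset (P : Params) (C : Coding P) : Set c00 := ⋃ N, ⋃ j, KF P C N j

/-- `f` has weight `w(f) = m_j`, i.e. `f ∈ K_n^j` for some `n ≥ 1`. -/
def KHasWeight (P : Params) (C : Coding P) (f : c00) (w : ℕ) : Prop :=
  ∃ N j, 1 ≤ j ∧ f ∈ KF P C (N + 1) j ∧ w = P.m j

/-- The norm of `X_ius` on `c00`: `‖x‖ = sup {f(x) : f ∈ K}`. -/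
def normK (P : Params) (C : Coding P) (x : c00) : ℝ :=
  sSup ((fun f => dot f x) '' Kset P C)

/-- The set `K̃`. -/
def Ktilde (P : Params) : Set c00 :=
  K0set ∪ {f | ∃ j, 1 ≤ j ∧ ∃ F : Finset ℕ, F.card ≤ P.n (2 * j) ∧
    ∃ ε : ℕ → ℝ, (∀ i, ε i = 1 ∨ ε i = -1) ∧
      f = ((P.m (2 * j) : ℝ))⁻¹ • ∑ i ∈ F, ε i • e i} ∪ {0}

/-- `‖x‖_K̃ = sup {f(x) : f ∈ K̃}`. -/
def normKt (P : Params) (x : c00) : ℝ := sSup ((fun f => dot f x) '' Ktilde P)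

/-- The norming family `W_n` of the auxiliary mixed Tsirelson space
`X_u = T[(A_{4n_j},1/m_j)_j]`. -/
def WF (P : Params) : ℕ → Set c00
  | 0 => K0set ∪ {0}
  | N + 1 => WF P N ∪ {f | ∃ j, 1 ≤ j ∧ ∃ fs : List c00, fs ≠ [] ∧
      fs.length ≤ 4 * P.n j ∧ (∀ g ∈ fs, g ∈ WF P N) ∧ fs.Chain' blockLt ∧
      f = ((P.m j : ℝ))⁻¹ • fs.sum}

/-- The norming set `W` of `X_u`. -/
def Wset (P : Params) : Set c00 := ⋃ N, WF P N

/-- The norming family of `X_{u,k} = T[(A_{4n_j},1/m_j)_{j=1}^k]`. -/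
def WFk (P : Params) (k : ℕ) : ℕ → Set c00
  | 0 => K0set ∪ {0}
  | N + 1 => WFk P k N ∪ {f | ∃ j, 1 ≤ j ∧ j ≤ k ∧ ∃ fs : List c00, fs ≠ [] ∧
      fs.length ≤ 4 * P.n j ∧ (∀ g ∈ fs, g ∈ WFk P k N) ∧ fs.Chain' blockLt ∧
      f = ((P.m j : ℝ))⁻¹ • fs.sum}

/-- The norming set `W^{(k)}` of `X_{u,k}`. -/
def Wk (P : Params) (k : ℕ) : Set c00 := ⋃ N, WFk P k N

/-- `f ∈ W` has weight `w(f) = m_j`. -/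
def WHasWeight (P : Params) (f : c00) (w : ℕ) : Prop :=
  ∃ j, 1 ≤ j ∧ w = P.m j ∧ ∃ fs : List c00, fs ≠ [] ∧ fs.length ≤ 4 * P.n j ∧
    (∀ g ∈ fs, g ∈ Wset P) ∧ fs.Chain' blockLt ∧ f = ((P.m j : ℝ))⁻¹ • fs.sum

/-- `f` admits a tree in `W` all of whose non-terminal nodes have weight `≠ w0`. -/
inductive WTreeAvoid (P : Params) (w0 : ℕ) : c00 → Prop
  | leaf (f : c00) (hf : f ∈ K0set ∪ {0}) : WTreeAvoid P w0 f
  | node (j : ℕ) (hj : 1 ≤ j) (hw : P.m j ≠ w0) (fs : List c00) (hne : fs ≠ [])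
      (hlen : fs.length ≤ 4 * P.n j) (hch : fs.Chain' blockLt)
      (hmem : ∀ g ∈ fs, WTreeAvoid P w0 g) :
      WTreeAvoid P w0 (((P.m j : ℝ))⁻¹ • fs.sum)

/-- `q_j = 1/log_{4n_j}(m_j) = log (4 n_j) / log (m_j)`. -/
def qexp (P : Params) (j : ℕ) : ℝ := Real.log (4 * (P.n j : ℝ)) / Real.log (P.m j : ℝ)

/-- `p_j = 1/(1 - log_{4n_j}(m_j))`, the conjugate exponent of `q_j`. -/
def pexp (P : Params) (j : ℕ) : ℝ :=
  1 / (1 - Real.log (P.m j : ℝ) / Real.log (4 * (P.n j : ℝ)))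

/-- `x` is a `C`-`ℓ_1^k` average. -/
def IsL1Avg (P : Params) (C : Coding P) (Cc : ℝ) (k : ℕ) (x : c00) : Prop :=
  ∃ xs : ℕ → c00, (∀ i, i + 1 < k → blockLt (xs i) (xs (i + 1))) ∧
    (∀ i < k, normK P C (xs i) ≤ Cc * normK P C x) ∧
    x = ((k : ℝ))⁻¹ • ∑ i ∈ Finset.range k, xs i

/-- `(x_k)_{k<N}` is a `(C,ε)`-rapidly increasing sequence. -/
def IsRIS (P : Params) (C : Coding P) (Cc ε : ℝ) (N : ℕ) (x : ℕ → c00) : Prop :=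
  (∀ k, k + 1 < N → blockLt (x k) (x (k + 1))) ∧
  ∃ jk : ℕ → ℕ, StrictMono jk ∧ (∀ k, 1 ≤ jk k) ∧
    ∀ k < N, normK P C (x k) ≤ Cc ∧
      ((rangeI (x k)).card : ℝ) / (P.m (jk (k + 1)) : ℝ) < ε ∧
      ∀ f ∈ Kset P C, ∀ w, KHasWeight P C f w → (w : ℝ) < (P.m (jk k) : ℝ) →
        |dot f (x k)| ≤ Cc / (w : ℝ)

/-- `(x_k)_{k<N}` is a `(C,ε)`-rapidly increasing sequence of `ℓ_1` averages. -/
def IsRISofAvgs (P : Params) (C : Coding P) (Cc ε : ℝ) (N : ℕ) (x : ℕ → c00) : Prop :=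
  (∀ k, k + 1 < N → blockLt (x k) (x (k + 1))) ∧
  ∃ jk : ℕ → ℕ, StrictMono jk ∧ (∀ k, 1 ≤ jk k) ∧
    ∀ k < N, normK P C (x k) = 1 ∧ IsL1Avg P C (2 * Cc / 3) (P.n (jk k)) (x k) ∧
      ((rangeI (x k)).card : ℝ) / (P.m (jk (k + 1)) : ℝ) < ε

/-- `χ` is a depended sequence of length `n_{2j+1}`. -/
def IsDependedSeq (P : Params) (C : Coding P) (j : ℕ) (χ : List (c00 × c00)) : Prop :=
  χ.length = P.n (2 * j + 1) ∧
  ∃ φ : List (c00 × c00), IsSpecialSeq P C φ ∧ φ.length = P.n (2 * j + 1) ∧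
    (∀ i, 1 ≤ i → i ≤ P.n (2 * j + 1) → fC χ i = fC φ i) ∧
    (∀ i, 1 ≤ i → 2 * i - 1 ≤ P.n (2 * j + 1) → xC χ (2 * i - 1) = xC φ (2 * i - 1)) ∧
    (∀ i, 1 ≤ i → 2 * i ≤ P.n (2 * j + 1) →
      (xC φ (2 * i)).support = (xC χ (2 * i)).support ∧
      normK P C (xC φ (2 * i) - xC χ (2 * i)) ≤
        1 / (P.n (C.σ (pref φ (2 * i - 1))) : ℝ) ^ 2 ∧
      (∃ c : ℝ, 0 < c ∧ c < 1 ∧ ∃ xs : ℕ → c00,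
        IsRISofAvgs P C 3 (1 / (P.n (C.σ (pref φ (2 * i - 1))) : ℝ))
          (P.n (C.σ (pref φ (2 * i - 1)))) xs ∧
        xC χ (2 * i) = (c / (P.n (C.σ (pref φ (2 * i - 1))) : ℝ)) •
          ∑ l ∈ Finset.range (P.n (C.σ (pref φ (2 * i - 1)))), xs l) ∧
      1 / (12 * (P.m (C.σ (pref φ (2 * i - 1))) : ℝ)) ≤
        dot (fC χ (2 * i)) (xC χ (2 * i)))

/-- The canonical map `c00 → X` sending `x` to `∑ k, x k • e' k`. -/
def lift {X : Type*} [AddCommGroup X] [Module ℝ X] (e' : ℕ → X) (x : c00) : X :=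
  x.sum fun k a => a • e' k

/-- `X`, together with the sequence `e'`, is a realization of the space `X_ius`:
the completion of `c00` under `‖·‖_K`, with `e'` the natural basis. -/
structure IsIusRep (P : Params) (C : Coding P) {X : Type*} [NormedAddCommGroup X]
    [NormedSpace ℝ X] (e' : ℕ → X) : Prop where
  norm_eq : ∀ x : c00, ‖lift e' x‖ = normK P C x
  dense : DenseRange (lift e')

/-- A bounded operator `S` is strictly singular: its restriction to no
infinite-dimensional closed subspace is an isomorphism onto its image
(i.e. it is bounded below on no such subspace). -/
def StrictlySingular {X : Type*} [NormedAddCommGroup X] [NormedSpace ℝ X]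
    (S : X →L[ℝ] X) : Prop :=
  ∀ Y : Submodule ℝ X, IsClosed (Y : Set X) → ¬ FiniteDimensional ℝ Y →
    ¬ ∃ c : ℝ, 0 < c ∧ ∀ y ∈ Y, c * ‖y‖ ≤ ‖S y‖

end Ius
namespace Ius

lemma restrictTo_apply (E : Set ℕ) (x : c00) (t : ℕ) :
    restrictTo E x t = if t ∈ E then x t else 0 := by
  simp [restrictTo, Finsupp.filter_apply]

lemma restrictTo_smul (E : Set ℕ) (c : ℝ) (x : c00) :
    restrictTo E (c • x) = c • restrictTo E x := by
  ext t
  rw [Finsupp.smul_apply, restrictTo_apply, restrictTo_apply, Finsupp.smul_apply]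
  split <;> simp

lemma restrictTo_neg (E : Set ℕ) (x : c00) :
    restrictTo E (-x) = - restrictTo E x := by
  ext t
  rw [Finsupp.neg_apply, restrictTo_apply, restrictTo_apply, Finsupp.neg_apply]
  split <;> simp

lemma restrictTo_add (E : Set ℕ) (x y : c00) :
    restrictTo E (x + y) = restrictTo E x + restrictTo E y := by
  ext t
  rw [Finsupp.add_apply, restrictTo_apply, restrictTo_apply, restrictTo_apply,
    Finsupp.add_apply]
  split <;> simp

lemma restrictTo_zero (E : Set ℕ) : restrictTo E (0 : c00) = 0 := by
  ext t; simp [restrictTo_apply]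

lemma restrictTo_restrictTo (E F : Set ℕ) (x : c00) :
    restrictTo E (restrictTo F x) = restrictTo (E ∩ F) x := by
  ext t; simp [restrictTo_apply]; split <;> simp_all

lemma restrictTo_list_sum (E : Set ℕ) (l : List c00) :
    restrictTo E l.sum = (l.map (restrictTo E)).sum := by
  induction l with
  | nil => simp [restrictTo_zero]
  | cons a l ih => simp [restrictTo_add, ih]

lemma support_restrictTo_subset (E : Set ℕ) (x : c00) :
    (restrictTo E x).support ⊆ x.support := by
  intro t ht
  simp only [Finsupp.mem_support_iff, restrictTo_apply] at ht ⊢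
  intro h; apply ht; simp [h]

lemma IsInterval.inter {E F : Set ℕ} (hE : IsInterval E) (hF : IsInterval F) :
    IsInterval (E ∩ F) := by
  intro a ha b hb c h1 h2
  exact ⟨hE a ha.1 b hb.1 c h1 h2, hF a ha.2 b hb.2 c h1 h2⟩

lemma isInterval_Icc (a b : ℕ) : IsInterval (Set.Icc a b) := by
  intro x hx y hy c h1 h2
  exact ⟨le_trans hx.1 h1, le_trans h2 hy.2⟩

-- dot lemmas
lemma dot_eq_sum (f x : c00) : dot f x = ∑ t ∈ x.support, f t * x t := rfl

lemma dot_eq_sum_subset (f x : c00) {s : Finset ℕ} (h : x.support ⊆ s) :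
    dot f x = ∑ t ∈ s, f t * x t := by
  rw [dot_eq_sum]
  exact Finset.sum_subset h (by intro t _ ht; simp [Finsupp.notMem_support_iff.mp ht])

lemma dot_zero_right (f : c00) : dot f 0 = 0 := by simp [dot]

lemma dot_smul_right (f x : c00) (c : ℝ) : dot f (c • x) = c * dot f x := by
  rw [dot_eq_sum_subset f (c • x) (Finsupp.support_smul), dot_eq_sum, Finset.mul_sum]
  apply Finset.sum_congr rfl
  intro t _; simp [Finsupp.smul_apply]; ring

lemma dot_add_right (f x y : c00) : dot f (x + y) = dot f x + dot f y := by
  rw [dot_eq_sum_subset f (x+y) Finsupp.support_add,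
    dot_eq_sum_subset f x (Finset.subset_union_left),
    dot_eq_sum_subset f y (Finset.subset_union_right), ← Finset.sum_add_distrib]
  apply Finset.sum_congr rfl
  intro t _; simp; ring

lemma dot_finset_sum_right (f : c00) (s : Finset ℕ) (x : ℕ → c00) :
    dot f (∑ i ∈ s, x i) = ∑ i ∈ s, dot f (x i) := by
  induction s using Finset.induction with
  | empty => simp [dot_zero_right]
  | insert _ _ h ih => rw [Finset.sum_insert h, Finset.sum_insert h, dot_add_right, ih]

lemma dot_neg_left (f x : c00) : dot (-f) x = - dot f x := by
  rw [dot_eq_sum, dot_eq_sum, ← Finset.sum_neg_distrib]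
  apply Finset.sum_congr rfl; intro t _; simp

lemma dot_smul_left (f x : c00) (c : ℝ) : dot (c • f) x = c * dot f x := by
  rw [dot_eq_sum, dot_eq_sum, Finset.mul_sum]
  apply Finset.sum_congr rfl; intro t _; simp [Finsupp.smul_apply]; ring

lemma dot_add_left (f g x : c00) : dot (f + g) x = dot f x + dot g x := by
  rw [dot_eq_sum, dot_eq_sum, dot_eq_sum, ← Finset.sum_add_distrib]
  apply Finset.sum_congr rfl; intro t _; simp; ring

lemma dot_list_sum_left (l : List c00) (x : c00) :
    dot l.sum x = (l.map (dot · x)).sum := by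
  induction l with
  | nil => simp [dot_eq_sum]
  | cons a l ih => simp [dot_add_left, ih]

lemma dot_restrictTo_of_support_subset (E : Set ℕ) (f x : c00)
    (h : ∀ t ∈ x.support, t ∈ E) : dot (restrictTo E f) x = dot f x := by
  rw [dot_eq_sum, dot_eq_sum]
  apply Finset.sum_congr rfl
  intro t ht; rw [restrictTo_apply, if_pos (h t ht)]

lemma dot_eq_zero_of_disjoint (f x : c00) (h : ∀ t ∈ x.support, f t = 0) :
    dot f x = 0 := by
  rw [dot_eq_sum]
  exact Finset.sum_eq_zero fun t ht => by rw [h t ht, zero_mul]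



lemma restrictTo_single (E : Set ℕ) (k : ℕ) (c : ℝ) :
    restrictTo E (Finsupp.single k c) = if k ∈ E then Finsupp.single k c else 0 := by
  by_cases hk : k ∈ E
  · rw [if_pos hk]; ext t; rw [restrictTo_apply]
    split
    · rfl
    · rename_i ht
      exact (Finsupp.single_eq_of_ne' (fun h : k = t => ht (h ▸ hk))).symm
  · rw [if_neg hk]; ext t; rw [restrictTo_apply]
    split
    · rename_i ht
      rw [Finsupp.single_eq_of_ne' (fun h : k = t => hk (h.symm ▸ ht))]; rfl
    · rfl

section KLemmas

variable (P : Params) (C : Coding P)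

lemma KF_zero_eq (j : ℕ) : KF P C 0 j = if j = 0 then K0set else ∅ := rfl

lemma KF_succ_eq (N j : ℕ) : KF P C (N+1) j =
    if j = 0 then K0set
    else if j = 1 then ∅
    else if j % 2 = 0 then KF P C N j ∪ evenStep P (KF P C N) (j / 2)
    else KF P C N j ∪ oddStep P C (KF P C N) (j / 2) := rfl

lemma KF_zero' (N : ℕ) : KF P C N 0 = K0set := by
  cases N <;> rfl

lemma KF_one (N : ℕ) : KF P C N 1 = ∅ := by
  cases N <;> rfl

lemma KF_mono (N j : ℕ) : KF P C N j ⊆ KF P C (N+1) j := by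
  intro f hf
  rw [KF_succ_eq]
  by_cases h0 : j = 0
  · subst h0; rw [KF_zero'] at hf; simpa using hf
  · by_cases h1 : j = 1
    · subst h1; rw [KF_one] at hf; simp at hf
    · rw [if_neg h0, if_neg h1]
      by_cases h2 : j % 2 = 0
      · rw [if_pos h2]; exact Or.inl hf
      · rw [if_neg h2]; exact Or.inl hf

lemma KF_mono_le {N M : ℕ} (h : N ≤ M) (j : ℕ) : KF P C N j ⊆ KF P C M j := by
  induction M with
  | zero => cases Nat.le_zero.mp h; exact subset_rfl
  | succ M ih =>
    rcases Nat.lt_or_ge N (M+1) with h'|h'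
    · exact (ih (Nat.lt_succ_iff.mp h')).trans (KF_mono P C M j)
    · have : N = M + 1 := le_antisymm h h'
      subst this; exact subset_rfl

lemma mem_Kset_of_KF {N j : ℕ} {f : c00} (h : f ∈ KF P C N j) : f ∈ Kset P C := by
  exact Set.mem_iUnion.mpr ⟨N, Set.mem_iUnion.mpr ⟨j, h⟩⟩

lemma e_mem_Kset (k : ℕ) : e k ∈ Kset P C :=
  mem_Kset_of_KF P C (N := 0) (j := 0) ⟨k, Or.inl rfl⟩

lemma Kset_nonempty : (Kset P C).Nonempty := ⟨e 0, e_mem_Kset P C 0⟩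

lemma exists_level (l : List c00) (h : ∀ g ∈ l, g ∈ Kset P C) :
    ∃ M, ∀ g ∈ l, ∃ j, g ∈ KF P C M j := by
  induction l with
  | nil => exact ⟨0, by simp⟩
  | cons a l ih =>
    obtain ⟨M, hM⟩ := ih (fun g hg => h g (List.mem_cons_of_mem a hg))
    obtain ⟨N, hN⟩ := Set.mem_iUnion.mp (h a List.mem_cons_self)
    obtain ⟨j, hj⟩ := Set.mem_iUnion.mp hN
    refine ⟨max N M, ?_⟩
    intro g hg
    rcases List.mem_cons.mp hg with rfl | hg
    · exact ⟨j, KF_mono_le P C (le_max_left N M) j hj⟩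
    · obtain ⟨j', hj'⟩ := hM g hg
      exact ⟨j', KF_mono_le P C (le_max_right N M) j' hj'⟩

lemma blockLt_of_subset {x y x' y' : c00} (hx : x'.support ⊆ x.support)
    (hy : y'.support ⊆ y.support) (h : blockLt x y) : blockLt x' y' :=
  fun a ha b hb => h a (hx ha) b (hy hb)

lemma blockLt_neg_iff (x y : c00) : blockLt (-x) (-y) ↔ blockLt x y := by
  unfold blockLt
  rw [Finsupp.support_neg, Finsupp.support_neg]

lemma list_sum_map_neg (l : List c00) : (l.map (fun g => -g)).sum = -l.sum := by
  induction l with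
  | nil => simp
  | cons a l ih => simp [ih]; abel

lemma neg_mem_KF (N : ℕ) : ∀ j (f : c00), f ∈ KF P C N j → -f ∈ KF P C N j := by
  induction N with
  | zero =>
    intro j f hf
    by_cases h0 : j = 0
    · subst h0; rw [KF_zero'] at hf ⊢
      obtain ⟨k, hk | hk⟩ := hf
      · exact ⟨k, Or.inr (by rw [hk])⟩
      · exact ⟨k, Or.inl (by rw [hk, neg_neg])⟩
    · rw [KF_zero_eq, if_neg h0] at hf; exact absurd hf (Set.notMem_empty f)
  | succ N ih =>
    intro j f hf
    by_cases h0 : j = 0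
    · subst h0; rw [KF_zero'] at hf ⊢
      obtain ⟨k, hk | hk⟩ := hf
      · exact ⟨k, Or.inr (by rw [hk])⟩
      · exact ⟨k, Or.inl (by rw [hk, neg_neg])⟩
    by_cases h1 : j = 1
    · subst h1; rw [KF_one] at hf; exact absurd hf (Set.notMem_empty f)
    rw [KF_succ_eq, if_neg h0, if_neg h1] at hf ⊢
    by_cases h2 : j % 2 = 0
    · rw [if_pos h2] at hf ⊢
      rcases hf with hf | hf
      · exact Or.inl (ih j f hf)
      · obtain ⟨fs, hne, hlen, hmem, hch, hsum⟩ := hf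
        refine Or.inr ⟨fs.map (fun g => -g), by simpa using hne, by simpa using hlen,
          ?_, ?_, ?_⟩
        · intro g hg
          obtain ⟨g₀, hg₀, rfl⟩ := List.mem_map.mp hg
          obtain ⟨j', hj'⟩ := hmem g₀ hg₀
          exact ⟨j', ih j' g₀ hj'⟩
        · unfold List.Chain' at hch ⊢
          rw [List.isChain_map]
          exact hch.imp (fun a b hab => (blockLt_neg_iff a b).mpr hab)
        · rw [list_sum_map_neg, hsum, smul_neg]
    · rw [if_neg h2] at hf ⊢
      rcases hf with hf | hf
      · exact Or.inl (ih j f hf)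
      · right
        rw [oddStep, Set.mem_iUnion₂] at hf ⊢
        obtain ⟨φ, hφ, hfφ⟩ := hf
        refine ⟨φ, hφ, ?_⟩
        obtain ⟨ε, hε, E, hE, f', lam, hcond, hfeq⟩ := hfφ
        refine ⟨-ε, by rcases hε with h|h <;> simp [h], E, hE, f', lam, hcond, ?_⟩
        rw [hfeq, neg_mul, ← neg_smul]

lemma neg_mem_Kset {f : c00} (h : f ∈ Kset P C) : -f ∈ Kset P C := by
  obtain ⟨N, hN⟩ := Set.mem_iUnion.mp h
  obtain ⟨j, hj⟩ := Set.mem_iUnion.mp hN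
  exact mem_Kset_of_KF P C (neg_mem_KF P C N j f hj)

lemma blockLt_trans_of_nonzero {a b c : c00} (hb : b ≠ 0) (h1 : blockLt a b)
    (h2 : blockLt b c) : blockLt a c := by
  intro u hu v hv
  obtain ⟨w, hw⟩ := Finsupp.support_nonempty_iff.mpr hb
  exact lt_trans (h1 u hu w hw) (h2 w hw v hv)

lemma pairwise_of_chain' : ∀ l : List c00, (∀ g ∈ l, g ≠ 0) → l.Chain' blockLt →
    l.Pairwise blockLt := by
  intro l
  induction l with
  | nil => intro _ _; exact List.Pairwise.nil
  | cons a l ih =>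
    intro hnz h
    have hl : l.Chain' blockLt := h.tail
    have hp := ih (fun g hg => hnz g (List.mem_cons_of_mem a hg)) hl
    refine List.pairwise_cons.mpr ⟨?_, hp⟩
    intro b hb
    cases l with
    | nil => simp at hb
    | cons c t =>
      have hac : blockLt a c := (List.isChain_cons_cons.mp h).1
      rcases List.mem_cons.mp hb with rfl | hb
      · exact hac
      · have hcb : blockLt c b := (List.pairwise_cons.mp hp).1 b hb
        exact blockLt_trans_of_nonzero (hnz c (by simp)) hac hcb

lemma list_sum_filter_ne_zero (l : List c00) :
    (l.filter (fun g => decide (g ≠ 0))).sum = l.sum := by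
  induction l with
  | nil => rfl
  | cons a l ih =>
    by_cases ha : a = 0
    · rw [List.filter_cons_of_neg (by simp [ha]), List.sum_cons, ih, ha, zero_add]
    · rw [List.filter_cons_of_pos (by simp [ha]), List.sum_cons, List.sum_cons, ih]

lemma K0_subset_Kset : K0set ⊆ Kset P C := fun f hf =>
  mem_Kset_of_KF P C (N := 0) (j := 0) hf

lemma restrict_K0 (E : Set ℕ) {f : c00} (hf : f ∈ K0set) :
    restrictTo E f ∈ Kset P C ∨ restrictTo E f = 0 := by
  obtain ⟨k, hk | hk⟩ := hf
  · subst hk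
    rw [show e k = Finsupp.single k 1 from rfl, restrictTo_single]
    split
    · exact Or.inl (e_mem_Kset P C k)
    · exact Or.inr rfl
  · subst hk
    rw [restrictTo_neg, show e k = Finsupp.single k 1 from rfl, restrictTo_single]
    split
    · exact Or.inl (K0_subset_Kset P C ⟨k, Or.inr rfl⟩)
    · exact Or.inr (by simp)

lemma restrict_mem_Kset (N : ℕ) : ∀ j (f : c00) (E : Set ℕ), IsInterval E →
    f ∈ KF P C N j → restrictTo E f ∈ Kset P C ∨ restrictTo E f = 0 := by
  induction N with
  | zero =>
    intro j f E hE hf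
    by_cases h0 : j = 0
    · subst h0; rw [KF_zero'] at hf; exact restrict_K0 P C E hf
    · rw [KF_zero_eq, if_neg h0] at hf; exact absurd hf (Set.notMem_empty f)
  | succ N ih =>
    intro j f E hE hf
    by_cases h0 : j = 0
    · subst h0; rw [KF_zero'] at hf; exact restrict_K0 P C E hf
    by_cases h1 : j = 1
    · subst h1; rw [KF_one] at hf; exact absurd hf (Set.notMem_empty f)
    rw [KF_succ_eq, if_neg h0, if_neg h1] at hf
    by_cases h2 : j % 2 = 0
    · rw [if_pos h2] at hf
      rcases hf with hf | hf
      · exact ih j f E hE hf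
      obtain ⟨fs, hne, hlen, hmem, hch, hsum⟩ := hf
      have hjj : 2 * (j / 2) = j := by omega
      set rlist := fs.map (restrictTo E) with hrlist
      have hrmem : ∀ g ∈ rlist, g ∈ Kset P C ∨ g = 0 := by
        intro g hg
        obtain ⟨g₀, hg₀, rfl⟩ := List.mem_map.mp hg
        obtain ⟨j', hj'⟩ := hmem g₀ hg₀
        exact ih j' g₀ E hE hj'
      have hrsum : restrictTo E f = ((P.m (2 * (j / 2)) : ℝ))⁻¹ • rlist.sum := by
        rw [hsum, restrictTo_smul, restrictTo_list_sum, hjj]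
      have hchr : rlist.Chain' blockLt := by
        unfold List.Chain' at hch ⊢
        rw [hrlist, List.isChain_map]
        exact hch.imp (fun {a b} hab => blockLt_of_subset (support_restrictTo_subset E _)
          (support_restrictTo_subset E _) hab)
      by_cases hzero : (0 : c00) ∈ Kset P C
      · left
        have hallmem : ∀ g ∈ rlist, g ∈ Kset P C := by
          intro g hg
          rcases hrmem g hg with h | h
          · exact h
          · rw [h]; exact hzero
        obtain ⟨M, hM⟩ := exists_level P C rlist hallmem
        apply mem_Kset_of_KF P C (N := M + 1) (j := j)
        rw [KF_succ_eq, if_neg h0, if_neg h1, if_pos h2]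
        right
        exact ⟨rlist, by simpa [hrlist] using hne, by simpa [hrlist] using hlen,
          hM, hchr, hrsum⟩
      · -- all original children are nonzero
        have hnz : ∀ g ∈ fs, g ≠ 0 := by
          intro g hg hg0
          obtain ⟨j', hj'⟩ := hmem g hg
          exact hzero (hg0 ▸ mem_Kset_of_KF P C hj')
        set zlist := rlist.filter (fun g => decide (g ≠ 0)) with hzlist
        have hzsum : zlist.sum = rlist.sum := list_sum_filter_ne_zero rlist
        by_cases hznil : zlist = []
        · right
          rw [hrsum, ← hzsum, hznil, List.sum_nil, smul_zero]
        · left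
          have hzmem : ∀ g ∈ zlist, g ∈ Kset P C := by
            intro g hg
            rw [hzlist, List.mem_filter] at hg
            rcases hrmem g hg.1 with h | h
            · exact h
            · exact absurd h (by simpa using hg.2)
          obtain ⟨M, hM⟩ := exists_level P C zlist hzmem
          apply mem_Kset_of_KF P C (N := M + 1) (j := j)
          rw [KF_succ_eq, if_neg h0, if_neg h1, if_pos h2]
          right
          refine ⟨zlist, hznil, ?_, hM, ?_, by rw [hrsum, hzsum]⟩
          · calc zlist.length ≤ rlist.length := List.length_filter_le _ _
              _ = fs.length := List.length_map _
              _ ≤ P.n (2 * (j / 2)) := hlen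
          · have hpfs : fs.Pairwise blockLt := pairwise_of_chain' fs hnz hch
            have hpr : rlist.Pairwise blockLt := by
              rw [hrlist]
              exact hpfs.map _ (fun a b hab => blockLt_of_subset
                (support_restrictTo_subset E _) (support_restrictTo_subset E _) hab)
            exact ((hpr.sublist List.filter_sublist)).isChain
    · rw [if_neg h2] at hf
      rcases hf with hf | hf
      · exact ih j f E hE hf
      left
      rw [oddStep, Set.mem_iUnion₂] at hf
      obtain ⟨φ, hφ, ε, hε, E₀, hE₀, f', lam, hcond, hfeq⟩ := hf
      apply mem_Kset_of_KF P C (N := N + 1) (j := j)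
      rw [KF_succ_eq, if_neg h0, if_neg h1, if_neg h2]
      right
      rw [oddStep, Set.mem_iUnion₂]
      refine ⟨φ, hφ, ε, hε, E ∩ E₀, hE.inter hE₀, f', lam, hcond, ?_⟩
      rw [hfeq, restrictTo_smul, restrictTo_restrictTo]

lemma evenStep_mem_KF {M J : ℕ} (hJ : 1 ≤ J) {f : c00}
    (hf : f ∈ evenStep P (KF P C M) J) : f ∈ KF P C (M + 1) (2 * J) := by
  rw [KF_succ_eq, if_neg (by omega), if_neg (by omega), if_pos (by omega)]
  right
  rw [Nat.mul_div_cancel_left J (by norm_num : 0 < 2)]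
  exact hf

lemma m_ge_two : ∀ j, 1 ≤ j → 2 ≤ P.m j := by
  intro j hj
  induction j with
  | zero => omega
  | succ j ih =>
    cases Nat.eq_zero_or_pos j with
    | inl h => subst h; rw [P.m_one]
    | inr h =>
      have h2 := ih h
      rw [P.m_rec j h]
      calc 2 ≤ P.m j := h2
        _ ≤ P.m j ^ 5 := Nat.le_self_pow (by norm_num) _

lemma n_ge_pow : ∀ j, 1 ≤ j → 4 ^ j ≤ P.n j := by
  intro j hj
  induction j with
  | zero => omega
  | succ j ih =>
    cases Nat.eq_zero_or_pos j with
    | inl h => subst h; rw [P.n_one]; norm_num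
    | inr h =>
      have h2 := ih h
      rw [P.n_rec j h]
      calc 4 ^ (j + 1) = 4 * 4 ^ j := by ring
        _ ≤ 4 * P.n j := by omega
        _ ≤ (4 * P.n j) ^ P.s j := Nat.le_self_pow (by have := P.s_pos j h; omega) _

lemma dset_nonempty (x : c00) : ((fun f => dot f x) '' Kset P C).Nonempty :=
  ⟨_, Set.mem_image_of_mem _ (e_mem_Kset P C 0)⟩

lemma dot_le_normK {x f : c00} (hb : BddAbove ((fun f => dot f x) '' Kset P C))
    (hf : f ∈ Kset P C) : dot f x ≤ normK P C x :=
  le_csSup hb ⟨f, hf, rfl⟩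

lemma normK_zero : normK P C 0 = 0 := by
  have : ((fun f => dot f (0 : c00)) '' Kset P C) = {0} := by
    apply Set.eq_singleton_iff_nonempty_unique_mem.mpr
    exact ⟨dset_nonempty P C 0, by rintro r ⟨f, _, rfl⟩; exact dot_zero_right f⟩
  rw [normK, this, csSup_singleton]

lemma normK_smul_pos (v : c00) (c' : ℝ) (hc' : 0 < c')
    (hb : BddAbove ((fun f => dot f v) '' Kset P C))
    (hb2 : BddAbove ((fun f => dot f (c' • v)) '' Kset P C)) :
    normK P C (c' • v) = c' * normK P C v := by
  apply le_antisymm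
  · apply csSup_le (dset_nonempty P C _)
    rintro r ⟨f, hf, rfl⟩
    simp only [dot_smul_right]
    exact mul_le_mul_of_nonneg_left (dot_le_normK P C hb hf) hc'.le
  · rw [← le_inv_mul_iff₀ hc']
    apply csSup_le (dset_nonempty P C _)
    rintro r ⟨f, hf, rfl⟩
    simp only
    rw [show dot f v = c'⁻¹ * dot f (c' • v) by rw [dot_smul_right]; field_simp]
    exact mul_le_mul_of_nonneg_left (dot_le_normK P C hb2 hf) (by positivity)

end KLemmas

lemma dot_zero_left (x : c00) : dot 0 x = 0 := by
  simp [dot_eq_sum]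

lemma list_range_map_sum {M : Type} [AddCommMonoid M] (n : ℕ) (f : ℕ → M) :
    ((List.range n).map f).sum = ∑ i ∈ Finset.range n, f i := by
  induction n with
  | zero => rfl
  | succ n ih =>
    rw [List.range_succ, List.map_append, List.sum_append, Finset.sum_range_succ, ih]
    simp

lemma Ico_group {M : Type} [AddCommMonoid M] (c : ℕ) (f : ℕ → M) :
    ∀ (n a : ℕ), ∑ r ∈ Finset.range n,
        (∑ i ∈ Finset.Ico ((a + r) * c) ((a + r + 1) * c), f i)
      = ∑ i ∈ Finset.Ico (a * c) ((a + n) * c), f i := by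
  intro n
  induction n with
  | zero => intro a; simp
  | succ n ih =>
    intro a
    rw [Finset.sum_range_succ, ih a]
    exact Finset.sum_Ico_consecutive f
      (Nat.mul_le_mul_right c (by omega)) (Nat.mul_le_mul_right c (by omega))

def coeffs (s : Finset ℕ) (c : ℝ) : ℕ →₀ ℝ := c • ∑ i ∈ s, Finsupp.single i 1

lemma coeffs_apply (s : Finset ℕ) (c : ℝ) (ℓ : ℕ) :
    coeffs s c ℓ = if ℓ ∈ s then c else 0 := by
  classical
  rw [coeffs, Finsupp.smul_apply, Finsupp.finset_sum_apply]
  simp only [Finsupp.single_apply, Finset.sum_ite_eq', smul_eq_mul]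
  split <;> simp

lemma coeffs_support_subset (s : Finset ℕ) (c : ℝ) : (coeffs s c).support ⊆ s := by
  intro ℓ hℓ
  rw [Finsupp.mem_support_iff, coeffs_apply] at hℓ
  by_contra h
  rw [if_neg h] at hℓ
  exact hℓ rfl

lemma coeffs_sum_eq (s : Finset ℕ) (c : ℝ) (y : ℕ → c00) :
    ((coeffs s c).sum fun ℓ d => d • y ℓ) = c • ∑ i ∈ s, y i := by
  rw [Finsupp.sum_of_support_subset _ (coeffs_support_subset s c) _
    (by intro i _; simp), Finset.smul_sum]
  apply Finset.sum_congr rfl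
  intro i hi
  rw [coeffs_apply, if_pos hi]

lemma y_supp_lt (y : ℕ → c00) (hy : IsBlockSeq y) :
    ∀ i j, i < j → ∀ u ∈ (y i).support, ∀ v ∈ (y j).support, u < v := by
  intro i j hij
  induction j with
  | zero => omega
  | succ j ih =>
    intro u hu v hv
    rcases Nat.lt_or_ge i j with h | h
    · obtain ⟨w, hw⟩ := Finsupp.support_nonempty_iff.mpr (hy j).1
      exact lt_trans (ih h u hu w hw) ((hy j).2 w hw v hv)
    · have : i = j := by omega
      subst this
      exact (hy i).2 u hu v hv

lemma blockLt_sum (y : ℕ → c00) (hy : IsBlockSeq y) {A B : Finset ℕ}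
    (h : ∀ a ∈ A, ∀ b ∈ B, a < b) :
    blockLt (∑ i ∈ A, y i) (∑ i ∈ B, y i) := by
  intro u hu v hv
  obtain ⟨a, ha, hu'⟩ := Finset.mem_biUnion.mp (Finsupp.support_finset_sum hu)
  obtain ⟨b, hb, hv'⟩ := Finset.mem_biUnion.mp (Finsupp.support_finset_sum hv)
  exact y_supp_lt y hy a b (h a ha b hb) u hu' v hv'

section NormY

variable (P : Params) (C : Coding P) (y : ℕ → c00)

lemma bdd_y (hny : ∀ ℓ, normK P C (y ℓ) = 1) (ℓ : ℕ) :
    BddAbove ((fun f => dot f (y ℓ)) '' Kset P C) := by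
  by_contra h
  have h0 := Real.sSup_of_not_bddAbove h
  have h1 := hny ℓ
  rw [normK, h0] at h1
  norm_num at h1

lemma abs_dot_y (hny : ∀ ℓ, normK P C (y ℓ) = 1) (ℓ : ℕ) {f : c00}
    (hf : f ∈ Kset P C) : |dot f (y ℓ)| ≤ 1 := by
  have hb := bdd_y P C y hny ℓ
  rw [abs_le]
  constructor
  · have := dot_le_normK P C hb (neg_mem_Kset P C hf)
    rw [dot_neg_left, hny ℓ] at this
    linarith
  · have := dot_le_normK P C hb hf
    rw [hny ℓ] at this
    exact this

lemma bdd_smul_sum (hny : ∀ ℓ, normK P C (y ℓ) = 1) (s : Finset ℕ) (c : ℝ) :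
    BddAbove ((fun f => dot f (c • ∑ i ∈ s, y i)) '' Kset P C) := by
  refine ⟨|c| * s.card, ?_⟩
  rintro r ⟨f, hf, rfl⟩
  simp only
  rw [dot_smul_right, dot_finset_sum_right]
  calc c * ∑ i ∈ s, dot f (y i) ≤ |c * ∑ i ∈ s, dot f (y i)| := le_abs_self _
    _ = |c| * |∑ i ∈ s, dot f (y i)| := abs_mul _ _
    _ ≤ |c| * ∑ i ∈ s, |dot f (y i)| :=
        mul_le_mul_of_nonneg_left (Finset.abs_sum_le_sum_abs _ _) (abs_nonneg c)
    _ ≤ |c| * ∑ i ∈ s, (1:ℝ) :=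
        mul_le_mul_of_nonneg_left
          (Finset.sum_le_sum fun i _ => abs_dot_y P C y hny i hf) (abs_nonneg c)
    _ = |c| * s.card := by simp

lemma lower_est (hy : IsBlockSeq y) (hny : ∀ ℓ, normK P C (y ℓ) = 1)
    (J : ℕ) (hJ : 1 ≤ J) (a d : ℕ) (hd : 1 ≤ d) (hdn : d ≤ P.n (2 * J)) :
    (d : ℝ) / (P.m (2 * J) : ℝ) ≤ normK P C (∑ i ∈ Finset.Ico a (a + d), y i) := by
  have hne : ∀ i, (y i).support.Nonempty :=
    fun i => Finsupp.support_nonempty_iff.mpr (hy i).1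
  have hm2 : 2 ≤ P.m (2 * J) := m_ge_two P (2 * J) (by omega)
  have hm : (0:ℝ) < (P.m (2 * J) : ℝ) := by exact_mod_cast (by omega : 0 < P.m (2 * J))
  have hd0 : (0:ℝ) < (d : ℝ) := by exact_mod_cast hd
  set T := ∑ i ∈ Finset.Ico a (a + d), y i with hT
  have hbT : BddAbove ((fun f => dot f T) '' Kset P C) := by
    rw [hT]
    simpa using bdd_smul_sum P C y hny (Finset.Ico a (a + d)) 1
  apply le_of_forall_pos_le_add
  intro ε hε
  set δ : ℝ := min (1/2) (ε * (P.m (2*J) : ℝ) / d) with hδdef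
  have hδpos : 0 < δ := lt_min (by norm_num) (div_pos (mul_pos hε hm) hd0)
  have hδhalf : δ ≤ 1/2 := min_le_left _ _
  have hpick : ∀ i : ℕ, ∃ f, f ∈ Kset P C ∧ 1 - δ < dot f (y i) := by
    intro i
    have h1 : 1 - δ < sSup ((fun f => dot f (y i)) '' Kset P C) := by
      have h2 := hny i
      rw [normK] at h2
      rw [h2]
      linarith
    obtain ⟨r, ⟨f, hf, rfl⟩, hlt⟩ := exists_lt_of_lt_csSup (dset_nonempty P C (y i)) h1
    exact ⟨f, hf, hlt⟩
  choose F hFmem hFdot using hpick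
  set E : ℕ → Set ℕ :=
    fun i => Set.Icc ((y i).support.min' (hne i)) ((y i).support.max' (hne i)) with hE
  set g : ℕ → c00 := fun i => restrictTo (E i) (F i) with hg
  have hsub : ∀ i, ∀ t ∈ (y i).support, t ∈ E i := by
    intro i t ht
    exact ⟨Finset.min'_le _ t ht, Finset.le_max' _ t ht⟩
  have hgdot : ∀ i, dot (g i) (y i) = dot (F i) (y i) := fun i =>
    dot_restrictTo_of_support_subset (E i) (F i) (y i) (hsub i)
  have hgK : ∀ i, g i ∈ Kset P C := by
    intro i
    obtain ⟨N, hN⟩ := Set.mem_iUnion.mp (hFmem i)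
    obtain ⟨j, hj⟩ := Set.mem_iUnion.mp hN
    rcases restrict_mem_Kset P C N j (F i) (E i) (isInterval_Icc _ _) hj with h | h
    · exact h
    · exfalso
      have h2 := hgdot i
      simp only [hg] at h2
      rw [h, dot_zero_left] at h2
      have := hFdot i
      linarith
  have hgsupp : ∀ i, ∀ t ∈ (g i).support, t ∈ E i := by
    intro i t ht
    rw [Finsupp.mem_support_iff] at ht
    simp only [hg, restrictTo_apply] at ht
    by_contra hc
    rw [if_neg hc] at ht
    exact ht rfl
  have hcross : ∀ i i', i' ≠ i → dot (g i) (y i') = 0 := by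
    intro i i' hne'
    apply dot_eq_zero_of_disjoint
    intro t ht
    by_contra h0
    have htE := hgsupp i t (Finsupp.mem_support_iff.mpr h0)
    rcases Nat.lt_or_ge i' i with hlt | hge
    · have := y_supp_lt y hy i' i hlt t ht ((y i).support.min' (hne i))
        (Finset.min'_mem _ _)
      have h1 := htE.1
      omega
    · have hlt' : i < i' := lt_of_le_of_ne hge (fun h => hne' h.symm)
      have := y_supp_lt y hy i i' hlt' ((y i).support.max' (hne i))
        (Finset.max'_mem _ _) t ht
      have h2 := htE.2
      omega
  set L := (List.range d).map (fun r => g (a + r)) with hL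
  have hchain : L.Chain' blockLt := by
    unfold List.Chain'
    rw [hL, List.isChain_map]
    obtain ⟨d', rfl⟩ : ∃ d', d = d' + 1 := ⟨d - 1, by omega⟩
    rw [List.isChain_range_succ]
    intro r _
    intro u hu v hv
    have hu' := (hgsupp (a + r) u hu).2
    have hv' := (hgsupp (a + r + 1) v hv).1
    have hmid := y_supp_lt y hy (a+r) (a+r+1) (by omega)
      ((y (a+r)).support.max' (hne _)) (Finset.max'_mem _ _)
      ((y (a+r+1)).support.min' (hne _)) (Finset.min'_mem _ _)
    omega
  have hLK : ∀ h ∈ L, h ∈ Kset P C := by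
    intro h hh
    obtain ⟨r, _, rfl⟩ := List.mem_map.mp hh
    exact hgK _
  obtain ⟨M, hM⟩ := exists_level P C L hLK
  set G : c00 := ((P.m (2*J) : ℝ))⁻¹ • L.sum with hG
  have hGK : G ∈ Kset P C := by
    have hstep : G ∈ evenStep P (KF P C M) J := by
      refine ⟨L, ?_, ?_, hM, hchain, rfl⟩
      · rw [hL]
        simp only [ne_eq, List.map_eq_nil_iff, List.range_eq_nil]
        omega
      · rw [hL]
        simpa using hdn
    exact mem_Kset_of_KF P C (evenStep_mem_KF P C hJ hstep)
  have hdotG : ((d:ℝ) * (1 - δ)) / (P.m (2*J) : ℝ) ≤ dot G T := by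
    rw [hG, dot_smul_left, hL, dot_list_sum_left, List.map_map]
    rw [list_range_map_sum d ((fun h => dot h T) ∘ (fun r => g (a + r)))]
    have heach : ∀ r ∈ Finset.range d, (1 - δ) ≤ ((fun h => dot h T) ∘ (fun r => g (a + r))) r := by
      intro r hr
      rw [Finset.mem_range] at hr
      simp only [Function.comp_apply]
      rw [hT, dot_finset_sum_right, Finset.sum_eq_single (a + r)]
      · rw [hgdot]
        linarith [hFdot (a+r)]
      · intro i' _ hne'
        exact hcross (a+r) i' hne'
      · intro h
        exfalso
        exact h (by simp only [Finset.mem_Ico]; omega)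
    have hsum : (d:ℝ) * (1 - δ) ≤ ∑ r ∈ Finset.range d,
        ((fun h => dot h T) ∘ (fun r => g (a + r))) r := by
      have := Finset.card_nsmul_le_sum (Finset.range d) _ (1 - δ) heach
      simpa [nsmul_eq_mul] using this
    rw [div_eq_inv_mul]
    exact mul_le_mul_of_nonneg_left hsum (by positivity)
  have hnT := dot_le_normK P C hbT hGK
  have hdelta : (d:ℝ) * δ / (P.m (2*J) : ℝ) ≤ ε := by
    rw [div_le_iff₀ hm]
    calc (d:ℝ) * δ ≤ (d:ℝ) * (ε * (P.m (2*J) : ℝ) / d) :=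
          mul_le_mul_of_nonneg_left (min_le_right _ _) hd0.le
      _ = ε * (P.m (2*J) : ℝ) := by field_simp
  have hexp : (d:ℝ) / (P.m (2*J) : ℝ)
      = ((d:ℝ) * (1 - δ)) / (P.m (2*J) : ℝ) + (d:ℝ) * δ / (P.m (2*J) : ℝ) := by
    field_simp
    ring
  rw [hexp]
  linarith

end NormY

/-- For every normalized block sequence `(y_ℓ)` and every `k ≥ m_2`
there is a finite linear combination of `(y_ℓ)` which is a normalized
`2`-`ℓ_1^k` average. -/
theorem statement14 (P : Params) (C : Coding P) (y : ℕ → c00) (hy : IsBlockSeq y)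
    (hny : ∀ ℓ, normK P C (y ℓ) = 1) (k : ℕ) (hk : P.m 2 ≤ k) :
    ∃ a : ℕ →₀ ℝ, normK P C (a.sum fun ℓ c => c • y ℓ) = 1 ∧
      IsL1Avg P C 2 k (a.sum fun ℓ c => c • y ℓ) := by
  by_contra hcon
  push_neg at hcon
  have hm2' : 2 ≤ P.m 2 := m_ge_two P 2 (by omega)
  have hk2 : 2 ≤ k := le_trans hm2' hk
  have hkle : k ≤ P.n (2 * k - 1) := by
    have h1 : k < 2 ^ k := Nat.lt_two_pow_self
    have h2 : (2:ℕ) ^ k ≤ 4 ^ k := Nat.pow_le_pow_left (by norm_num) k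
    have h3 : (4:ℕ) ^ k ≤ 4 ^ (2 * k - 1) := Nat.pow_le_pow_right (by norm_num) (by omega)
    have h4 := n_ge_pow P (2 * k - 1) (by omega)
    omega
  set jo := 2 * k - 1 with hjo
  have hjo1 : 1 ≤ jo := by omega
  set N := P.s jo with hNdef
  have hN1 : 1 ≤ N := P.s_pos jo hjo1
  have hjo2 : jo + 1 = 2 * k := by omega
  have hrec := P.n_rec jo hjo1
  rw [hjo2] at hrec
  have hkN : k ^ N ≤ P.n (2 * k) := by
    rw [hrec]
    exact Nat.pow_le_pow_left (by omega) N
  have hms := P.s_big jo hjo1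
  rw [hjo2] at hms
  rw [← hNdef] at hms
  have hm2 : 2 ≤ P.m (2 * k) := m_ge_two P (2 * k) (by omega)
  have hmlt : P.m (2 * k) < 2 ^ N := by nlinarith [hms, hm2, sq_nonneg (P.m (2 * k))]
  have hm2R : (0:ℝ) < (P.m (2 * k) : ℝ) := by exact_mod_cast (by omega : 0 < P.m (2 * k))
  set T : ℕ → ℕ → c00 :=
    fun s t => ∑ i ∈ Finset.Ico (t * k ^ s) ((t + 1) * k ^ s), y i with hTdef
  have hlow : ∀ s t, s ≤ N → ((k ^ s : ℕ) : ℝ) / (P.m (2 * k) : ℝ) ≤ normK P C (T s t) := by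
    intro s t hs
    have h1 : 1 ≤ k ^ s := Nat.one_le_pow s k (by omega)
    have h2 : k ^ s ≤ P.n (2 * k) := le_trans (Nat.pow_le_pow_right (by omega) hs) hkN
    have hle := lower_est P C y hy hny k (by omega) (t * k ^ s) (k ^ s) h1 h2
    have he : t * k ^ s + k ^ s = (t + 1) * k ^ s := by ring
    rw [he] at hle
    exact hle
  have hup : ∀ s, s ≤ N → ∀ t, normK P C (T s t) ≤ (k : ℝ) ^ s / 2 ^ s := by
    intro s
    induction s with
    | zero =>
      intro _ t
      have hT0 : T 0 t = y t := by
        simp [hTdef]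
      rw [hT0, hny t]
      norm_num
    | succ s ih =>
      intro hsN t
      have ihs := ih (by omega)
      set S := T (s + 1) t with hS
      have hSsum : S = ∑ i ∈ Finset.Ico (t * k ^ (s+1)) ((t + 1) * k ^ (s+1)), y i := rfl
      have hkp : (0:ℝ) < ((k ^ (s+1) : ℕ) : ℝ) := by
        exact_mod_cast Nat.one_le_pow (s+1) k (by omega)
      have hSpos : 0 < normK P C S :=
        lt_of_lt_of_le (div_pos hkp hm2R) (hlow (s+1) t hsN)
      set cc := (normK P C S)⁻¹ with hcc
      have hccpos : 0 < cc := inv_pos.mpr hSpos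
      have hbS : BddAbove ((fun f => dot f S) '' Kset P C) := by
        rw [hSsum]
        simpa using bdd_smul_sum P C y hny
          (Finset.Ico (t * k ^ (s+1)) ((t + 1) * k ^ (s+1))) 1
      have hbcS : BddAbove ((fun f => dot f (cc • S)) '' Kset P C) := by
        rw [hSsum]
        exact bdd_smul_sum P C y hny
          (Finset.Ico (t * k ^ (s+1)) ((t + 1) * k ^ (s+1))) cc
      have hv1 : normK P C (cc • S) = 1 := by
        rw [normK_smul_pos P C S cc hccpos hbS hbcS, hcc,
          inv_mul_cancel₀ (ne_of_gt hSpos)]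
      have hsum0 := coeffs_sum_eq (Finset.Ico (t * k ^ (s+1)) ((t + 1) * k ^ (s+1))) cc y
      have hnot := hcon (coeffs (Finset.Ico (t * k ^ (s+1)) ((t + 1) * k ^ (s+1))) cc)
        (by rw [hsum0, ← hSsum]; exact hv1)
      rw [hsum0, ← hSsum] at hnot
      set xs : ℕ → c00 := fun r => ((k : ℝ) * cc) • T s (t * k + r) with hxs
      have hgroup : ∑ r ∈ Finset.range k, T s (t * k + r) = S := by
        rw [hSsum, show t * k ^ (s+1) = (t * k) * k ^ s by ring,
          show (t + 1) * k ^ (s+1) = (t * k + k) * k ^ s by ring]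
        exact Ico_group (k ^ s) y k (t * k)
      have hdecomp : cc • S = ((k:ℝ))⁻¹ • ∑ i ∈ Finset.range k, xs i := by
        have hk0 : (k:ℝ) ≠ 0 := by positivity
        calc cc • S = ((k:ℝ))⁻¹ • (((k:ℝ) * cc) • S) := by
              rw [smul_smul]
              congr 1
              field_simp
          _ = ((k:ℝ))⁻¹ • ∑ i ∈ Finset.range k, xs i := by
              rw [← hgroup, ← Finset.smul_sum]
      have hblock : ∀ i, i + 1 < k → blockLt (xs i) (xs (i + 1)) := by
        intro i _
        simp only [hxs]
        apply blockLt_of_subset (Finsupp.support_smul) (Finsupp.support_smul)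
        simp only [hTdef]
        apply blockLt_sum y hy
        intro p hp q hq
        rw [Finset.mem_Ico] at hp hq
        have h1 : (t * k + i + 1) * k ^ s = (t * k + (i + 1)) * k ^ s := by ring
        have hp2 := hp.2
        have hq1 := hq.1
        omega
      have hex : ∃ r, r < k ∧ 2 * normK P C (cc • S) < normK P C (xs r) := by
        by_contra hall
        push_neg at hall
        exact hnot ⟨xs, hblock, fun i hi => hall i hi, hdecomp⟩
      obtain ⟨r, hrk, hgt⟩ := hex
      have hbT' : BddAbove ((fun f => dot f (T s (t * k + r))) '' Kset P C) := by
        simp only [hTdef]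
        simpa using bdd_smul_sum P C y hny
          (Finset.Ico ((t * k + r) * k ^ s) ((t * k + r + 1) * k ^ s)) 1
      have hbxs : BddAbove ((fun f => dot f (((k:ℝ) * cc) • T s (t * k + r))) '' Kset P C) := by
        simp only [hTdef]
        exact bdd_smul_sum P C y hny
          (Finset.Ico ((t * k + r) * k ^ s) ((t * k + r + 1) * k ^ s)) ((k:ℝ) * cc)
      have hnx : normK P C (xs r) = ((k:ℝ) * cc) * normK P C (T s (t * k + r)) := by
        simp only [hxs]
        exact normK_smul_pos P C _ _ (by positivity) hbT' hbxs
      rw [hnx, hv1, mul_one] at hgt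
      have hTle := ihs (t * k + r)
      have hfin : (2:ℝ) < ((k:ℝ) * cc) * ((k : ℝ) ^ s / 2 ^ s) :=
        lt_of_lt_of_le hgt (mul_le_mul_of_nonneg_left hTle (by positivity))
      have hSval : normK P C S = cc⁻¹ := by rw [hcc, inv_inv]
      have h2s : (0:ℝ) < 2 ^ s := by positivity
      have h3 : 2 * cc⁻¹ < (k:ℝ) * ((k : ℝ) ^ s / 2 ^ s) := by
        have hmul := mul_lt_mul_of_pos_right hfin (inv_pos.mpr hccpos)
        calc 2 * cc⁻¹ < ((k:ℝ) * cc) * ((k : ℝ) ^ s / 2 ^ s) * cc⁻¹ := hmul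
          _ = (k:ℝ) * ((k : ℝ) ^ s / 2 ^ s) := by field_simp
      have htgt : (k:ℝ) ^ (s+1) / 2 ^ (s+1) = ((k:ℝ) * ((k : ℝ) ^ s / 2 ^ s)) / 2 := by
        field_simp
        ring
      rw [hSval, htgt]
      linarith
  have hupN := hup N le_rfl 0
  have hlowN := hlow N 0 le_rfl
  have hcomb := le_trans hlowN hupN
  rw [Nat.cast_pow] at hcomb
  have hkR : (0:ℝ) < (k:ℝ) ^ N := by positivity
  have h2N : (0:ℝ) < (2:ℝ) ^ N := by positivity
  have hfin2 : (2:ℝ) ^ N ≤ (P.m (2 * k) : ℝ) := by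
    rw [div_le_div_iff₀ hm2R h2N] at hcomb
    nlinarith
  have : (2:ℕ) ^ N ≤ P.m (2 * k) := by exact_mod_cast hfin2
  omega

end Ius
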